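/- Consider a graph containing an edge (x,y) with d(x) = d(y) = 3 such that (x,y) lies in a triangle, i.e. there exists z adjacent to both x and y. Then W(μ_x^{1/4}, μ_y^{1/4}) < 1, so k_{1/4}(x,y) > 0. -/
import Mathlib


open scoped BigOperators

namespace RicciFlatPaper

variable {V : Type*}

/-- Degree of a vertex (as the number of neighbors). -/
noncomputable def deg (G : SimpleGraph V) (v : V) : ℕ := (G.neighborSet v).ncard

/-- A graph is locally finite if every vertex has finitely many neighbors. -/
def LocFin (G : SimpleGraph V) : Prop := ∀ v : V, (G.neighborSet v).Finite

/-- A finitely supported probability distribution on the vertex set. -/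
def IsProbDist (μ : V → ℝ) : Prop :=
  (∀ v, 0 ≤ μ v) ∧ (Function.support μ).Finite ∧ ∑ᶠ v, μ v = 1

/-- A (finitely supported) coupling between two distributions. -/
def IsCoupling (μ₁ μ₂ : V → ℝ) (A : V → V → ℝ) : Prop :=
  (∀ x y, 0 ≤ A x y) ∧ (Function.support fun p : V × V => A p.1 p.2).Finite ∧
  (∀ x, ∑ᶠ y, A x y = μ₁ x) ∧ (∀ y, ∑ᶠ x, A x y = μ₂ y)

/-- Transportation cost of a coupling with respect to the graph distance. -/
noncomputable def cost (G : SimpleGraph V) (A : V → V → ℝ) : ℝ :=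
  ∑ᶠ p : V × V, A p.1 p.2 * (G.dist p.1 p.2 : ℝ)

/-- The transportation (Wasserstein) distance between two distributions. -/
noncomputable def W (G : SimpleGraph V) (μ₁ μ₂ : V → ℝ) : ℝ :=
  sInf {c : ℝ | ∃ A : V → V → ℝ, IsCoupling μ₁ μ₂ A ∧ c = cost G A}

open Classical in
/-- The lazy neighborhood measure `μ_x^α`. -/
noncomputable def mu (G : SimpleGraph V) (α : ℝ) (x : V) : V → ℝ :=
  fun z => if z = x then α else if G.Adj x z then (1 - α) / (deg G x : ℝ) else 0

/-- The `α`-Ollivier–Ricci curvature `k_α(x,y) = 1 - W(μ_x^α, μ_y^α)`. -/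
noncomputable def kIdle (G : SimpleGraph V) (α : ℝ) (x y : V) : ℝ :=
  1 - W G (mu G α x) (mu G α y)

/-- `HasRicci G x y k` means the Lin–Lu–Yau curvature `k(x,y) = lim_{α→1} k_α(x,y)/(1-α)`
exists and equals `k`. -/
def HasRicci (G : SimpleGraph V) (x y : V) (k : ℝ) : Prop :=
  Filter.Tendsto (fun α : ℝ => kIdle G α x y / (1 - α))
    (nhdsWithin (1 : ℝ) (Set.Iio (1 : ℝ))) (nhds k)

/-- A graph is Ricci-flat if the Lin–Lu–Yau curvature vanishes on every edge. -/
def RicciFlat (G : SimpleGraph V) : Prop := ∀ x y : V, G.Adj x y → HasRicci G x y 0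

/-- `f` is 1-Lipschitz with respect to the graph distance. -/
def Lip1 (G : SimpleGraph V) (f : V → ℝ) : Prop :=
  ∀ u v : V, f u - f v ≤ (G.dist u v : ℝ)

/-- The edge `(x,y)` is contained in some cycle of length `n`. -/
def EdgeInCycle (G : SimpleGraph V) (n : ℕ) (x y : V) : Prop :=
  ∃ (u : V) (w : G.Walk u u), w.IsCycle ∧ w.length = n ∧ s(x, y) ∈ w.edges

end RicciFlatPaper

namespace RicciFlatPaper

variable {V : Type*}

/-- an edge with both endpoints of degree 3 lying in a triangle has
`W(μ_x^{1/4}, μ_y^{1/4}) < 1`, so `k_{1/4}(x,y) > 0`. -/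
lemma support_ite_finite {α : Type*} (w : α) (c : ℝ) (P : α → Prop) [DecidablePred P]
    (h : ∀ v, P v → v = w) :
    (Function.support fun v => if P v then c else 0).Finite := by
  apply Set.Finite.subset (Set.finite_singleton w)
  intro v hv
  by_cases hP : P v
  · exact h v hP
  · simp [Function.support, hP] at hv

lemma finsum_ite_single {α : Type*} (w : α) (c : ℝ) (P : α → Prop) [DecidablePred P]
    (h : ∀ v, P v → v = w) :
    ∑ᶠ v, (if P v then c else 0) = if P w then c else 0 := by
  rw [finsum_eq_single _ w]
  intro v hv
  by_cases hP : P v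
  · exact absurd (h v hP) hv
  · simp [hP]

lemma support_ite_mul_finite {α : Type*} (w : α) (c : ℝ) (g : α → ℝ) (P : α → Prop)
    [DecidablePred P] (h : ∀ v, P v → v = w) :
    (Function.support fun v => (if P v then c else 0) * g v).Finite := by
  apply Set.Finite.subset (Set.finite_singleton w)
  intro v hv
  by_cases hP : P v
  · exact h v hP
  · simp [Function.support, hP] at hv

lemma finsum_ite_single_mul {α : Type*} (w : α) (c : ℝ) (g : α → ℝ) (P : α → Prop)
    [DecidablePred P] (h : ∀ v, P v → v = w) :
    ∑ᶠ v, (if P v then c else 0) * g v = (if P w then c else 0) * g w := by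
  rw [finsum_eq_single _ w]
  intro v hv
  by_cases hP : P v
  · exact absurd (h v hP) hv
  · simp [hP]

theorem W_lt_one_deg33_triangle (G : SimpleGraph V) (hG : G.Connected)
    (x y z : V) (hxy : G.Adj x y) (hdx : deg G x = 3) (hdy : deg G y = 3)
    (hxz : G.Adj x z) (hyz : G.Adj y z) :
    W G (mu G (1/4) x) (mu G (1/4) y) < 1 ∧ 0 < kIdle G (1/4) x y := by
  suffices hW : W G (mu G (1/4) x) (mu G (1/4) y) < 1 by
    exact ⟨hW, by simp only [kIdle]; linarith⟩
  classical
  have hfx : (G.neighborSet x).Finite :=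
    Set.finite_of_ncard_ne_zero (by show deg G x ≠ 0; omega)
  have hfy : (G.neighborSet y).Finite :=
    Set.finite_of_ncard_ne_zero (by show deg G y ≠ 0; omega)
  -- third neighbor of x
  have hnsubx : ¬ (G.neighborSet x ⊆ {y, z}) := by
    intro h
    have h2 : (G.neighborSet x).ncard ≤ ({y, z} : Set V).ncard :=
      Set.ncard_le_ncard h (Set.toFinite _)
    have h3 : ({y, z} : Set V).ncard ≤ 2 := by
      have := Set.ncard_insert_le y ({z} : Set V)
      simpa using this
    have : deg G x ≤ 2 := le_trans h2 h3
    omega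
  obtain ⟨a, haN, haYZ⟩ := Set.not_subset.mp hnsubx
  have hax : G.Adj x a := haN
  have hay : a ≠ y := by intro h; exact haYZ (by simp [h])
  have haz : a ≠ z := by intro h; exact haYZ (by simp [h])
  have hnsuby : ¬ (G.neighborSet y ⊆ {x, z}) := by
    intro h
    have h2 : (G.neighborSet y).ncard ≤ ({x, z} : Set V).ncard :=
      Set.ncard_le_ncard h (Set.toFinite _)
    have h3 : ({x, z} : Set V).ncard ≤ 2 := by
      have := Set.ncard_insert_le x ({z} : Set V)
      simpa using this
    have : deg G y ≤ 2 := le_trans h2 h3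
    omega
  obtain ⟨b, hbN, hbXZ⟩ := Set.not_subset.mp hnsuby
  have hyb : G.Adj y b := hbN
  have hbx : b ≠ x := by intro h; exact hbXZ (by simp [h])
  have hbz : b ≠ z := by intro h; exact hbXZ (by simp [h])
  -- neighbor sets
  have hNx : G.neighborSet x = {y, z, a} := by
    symm
    apply Set.eq_of_subset_of_ncard_le
    · intro v hv
      rcases hv with h | h | h
      · exact h ▸ hxy
      · exact h ▸ hxz
      · simp only [Set.mem_singleton_iff] at h; exact h ▸ hax
    · have hcard : ({y, z, a} : Set V).ncard = 3 := by
        rw [Set.ncard_insert_of_notMem (by simp [hyz.ne, hay.symm]) (Set.toFinite _),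
            Set.ncard_insert_of_notMem (by simp [haz.symm]) (Set.toFinite _),
            Set.ncard_singleton]
      rw [hcard]; exact le_of_eq hdx
    · exact hfx
  have hNy : G.neighborSet y = {x, z, b} := by
    symm
    apply Set.eq_of_subset_of_ncard_le
    · intro v hv
      rcases hv with h | h | h
      · exact h ▸ hxy.symm
      · exact h ▸ hyz
      · simp only [Set.mem_singleton_iff] at h; exact h ▸ hyb
    · have hcard : ({x, z, b} : Set V).ncard = 3 := by
        rw [Set.ncard_insert_of_notMem (by simp [hxz.ne, hbx.symm]) (Set.toFinite _),
            Set.ncard_insert_of_notMem (by simp [hbz.symm]) (Set.toFinite _),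
            Set.ncard_singleton]
      rw [hcard]; exact le_of_eq hdy
    · exact hfy
  -- the coupling
  set A : V → V → ℝ := fun u v =>
    (if u = x ∧ v = x then (1:ℝ)/4 else 0) + (if u = y ∧ v = y then (1:ℝ)/4 else 0) +
    (if u = z ∧ v = z then (1:ℝ)/4 else 0) + (if u = a ∧ v = b then (1:ℝ)/4 else 0) with hA
  have hxne : x ≠ y := hxy.ne
  have hzx : z ≠ x := hxz.ne'
  have hzy : z ≠ y := hyz.ne'
  have hax' : a ≠ x := hax.ne'
  have hby : b ≠ y := hyb.ne'
  have hmux : ∀ u, mu G (1/4) x u =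
      (if u = x then (1:ℝ)/4 else 0) + (if u = y then (1:ℝ)/4 else 0) +
      (if u = z then (1:ℝ)/4 else 0) + (if u = a then (1:ℝ)/4 else 0) := by
    intro u
    by_cases h1 : u = x
    · subst h1; simp [mu, hxne, hxz.ne, hax.ne]
    by_cases h2 : u = y
    · subst h2; simp [mu, hxne.symm, hzy.symm, hay.symm, hxy, hdx]; norm_num
    by_cases h3 : u = z
    · subst h3; simp [mu, hzx, hzy, haz.symm, hxz, hdx]; norm_num
    by_cases h4 : u = a
    · subst h4; simp [mu, hax', hay, haz, hax, hdx]; norm_num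
    · have hadj : ¬ G.Adj x u := by
        intro h
        have : u ∈ G.neighborSet x := h
        rw [hNx] at this
        rcases this with h | h | h
        · exact h2 h
        · exact h3 h
        · exact h4 h
      simp [mu, h1, h2, h3, h4, hadj]
  have hmuy : ∀ v, mu G (1/4) y v =
      (if v = x then (1:ℝ)/4 else 0) + (if v = y then (1:ℝ)/4 else 0) +
      (if v = z then (1:ℝ)/4 else 0) + (if v = b then (1:ℝ)/4 else 0) := by
    intro v
    by_cases h2 : v = y
    · subst h2; simp [mu, hxne.symm, hzy.symm, hby.symm]
    by_cases h1 : v = x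
    · subst h1; simp [mu, hxne, hzx.symm, hbx.symm, hxy.symm, hdy]; norm_num
    by_cases h3 : v = z
    · subst h3; simp [mu, hzy, hzx, hbz.symm, hyz, hdy]; norm_num
    by_cases h4 : v = b
    · subst h4; simp [mu, hby, hbx, hbz, hyb, hdy]; norm_num
    · have hadj : ¬ G.Adj y v := by
        intro h
        have : v ∈ G.neighborSet y := h
        rw [hNy] at this
        rcases this with h | h | h
        · exact h1 h
        · exact h3 h
        · exact h4 h
      simp [mu, h1, h2, h3, h4, hadj]
  have hcoup : IsCoupling (mu G (1/4) x) (mu G (1/4) y) A := by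
    refine ⟨?_, ?_, ?_, ?_⟩
    · intro u v
      simp only [hA]
      split_ifs <;> norm_num
    · apply Set.Finite.subset
        ((((Set.finite_singleton ((a, b) : V × V)).insert (z, z)).insert (y, y)).insert (x, x))
      intro p hp
      simp only [Function.mem_support, hA] at hp
      by_contra hne
      simp only [Set.mem_insert_iff, Set.mem_singleton_iff, not_or] at hne
      have e1 : ¬(p.1 = x ∧ p.2 = x) := fun h => hne.1 (Prod.ext h.1 h.2)
      have e2 : ¬(p.1 = y ∧ p.2 = y) := fun h => hne.2.1 (Prod.ext h.1 h.2)
      have e3 : ¬(p.1 = z ∧ p.2 = z) := fun h => hne.2.2.1 (Prod.ext h.1 h.2)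
      have e4 : ¬(p.1 = a ∧ p.2 = b) := fun h => hne.2.2.2 (Prod.ext h.1 h.2)
      simp [e1, e2, e3, e4] at hp
    · intro u
      have h1 : (Function.support fun v => if u = x ∧ v = x then (1:ℝ)/4 else 0).Finite :=
        support_ite_finite x _ _ (fun v hv => hv.2)
      have h2 : (Function.support fun v => if u = y ∧ v = y then (1:ℝ)/4 else 0).Finite :=
        support_ite_finite y _ _ (fun v hv => hv.2)
      have h3 : (Function.support fun v => if u = z ∧ v = z then (1:ℝ)/4 else 0).Finite :=
        support_ite_finite z _ _ (fun v hv => hv.2)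
      have h4 : (Function.support fun v => if u = a ∧ v = b then (1:ℝ)/4 else 0).Finite :=
        support_ite_finite b _ _ (fun v hv => hv.2)
      have h12 : (Function.support fun v => (if u = x ∧ v = x then (1:ℝ)/4 else 0) +
          (if u = y ∧ v = y then (1:ℝ)/4 else 0)).Finite :=
        Set.Finite.subset (h1.union h2) (Function.support_add _ _)
      have h123 : (Function.support fun v => (if u = x ∧ v = x then (1:ℝ)/4 else 0) +
          (if u = y ∧ v = y then (1:ℝ)/4 else 0) + (if u = z ∧ v = z then (1:ℝ)/4 else 0)).Finite :=
        Set.Finite.subset (h12.union h3) (Function.support_add _ _)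
      simp only [hA]
      rw [finsum_add_distrib h123 h4, finsum_add_distrib h12 h3, finsum_add_distrib h1 h2,
        finsum_ite_single x _ _ (fun v hv => hv.2), finsum_ite_single y _ _ (fun v hv => hv.2),
        finsum_ite_single z _ _ (fun v hv => hv.2), finsum_ite_single b _ _ (fun v hv => hv.2),
        hmux u]
      simp
    · intro v
      have h1 : (Function.support fun u => if u = x ∧ v = x then (1:ℝ)/4 else 0).Finite :=
        support_ite_finite x _ _ (fun u hu => hu.1)
      have h2 : (Function.support fun u => if u = y ∧ v = y then (1:ℝ)/4 else 0).Finite :=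
        support_ite_finite y _ _ (fun u hu => hu.1)
      have h3 : (Function.support fun u => if u = z ∧ v = z then (1:ℝ)/4 else 0).Finite :=
        support_ite_finite z _ _ (fun u hu => hu.1)
      have h4 : (Function.support fun u => if u = a ∧ v = b then (1:ℝ)/4 else 0).Finite :=
        support_ite_finite a _ _ (fun u hu => hu.1)
      have h12 : (Function.support fun u => (if u = x ∧ v = x then (1:ℝ)/4 else 0) +
          (if u = y ∧ v = y then (1:ℝ)/4 else 0)).Finite :=
        Set.Finite.subset (h1.union h2) (Function.support_add _ _)
      have h123 : (Function.support fun u => (if u = x ∧ v = x then (1:ℝ)/4 else 0) +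
          (if u = y ∧ v = y then (1:ℝ)/4 else 0) + (if u = z ∧ v = z then (1:ℝ)/4 else 0)).Finite :=
        Set.Finite.subset (h12.union h3) (Function.support_add _ _)
      simp only [hA]
      rw [finsum_add_distrib h123 h4, finsum_add_distrib h12 h3, finsum_add_distrib h1 h2,
        finsum_ite_single x _ _ (fun u hu => hu.1), finsum_ite_single y _ _ (fun u hu => hu.1),
        finsum_ite_single z _ _ (fun u hu => hu.1), finsum_ite_single a _ _ (fun u hu => hu.1),
        hmuy v]
      simp
  -- cost bound
  have hdab : G.dist a b ≤ 3 := by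
    have t1 : G.dist a b ≤ G.dist a x + G.dist x b := hG.dist_triangle
    have t2 : G.dist x b ≤ G.dist x y + G.dist y b := hG.dist_triangle
    have e1 : G.dist a x = 1 := SimpleGraph.dist_eq_one_iff_adj.mpr hax.symm
    have e2 : G.dist x y = 1 := SimpleGraph.dist_eq_one_iff_adj.mpr hxy
    have e3 : G.dist y b = 1 := SimpleGraph.dist_eq_one_iff_adj.mpr hyb
    omega
  have hcost : cost G A ≤ 3/4 := by
    have h1 : (Function.support fun p : V × V =>
        (if p.1 = x ∧ p.2 = x then (1:ℝ)/4 else 0) * (G.dist p.1 p.2 : ℝ)).Finite :=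
      support_ite_mul_finite ((x, x) : V × V) _ _ _ (fun p hp => Prod.ext hp.1 hp.2)
    have h2 : (Function.support fun p : V × V =>
        (if p.1 = y ∧ p.2 = y then (1:ℝ)/4 else 0) * (G.dist p.1 p.2 : ℝ)).Finite :=
      support_ite_mul_finite ((y, y) : V × V) _ _ _ (fun p hp => Prod.ext hp.1 hp.2)
    have h3 : (Function.support fun p : V × V =>
        (if p.1 = z ∧ p.2 = z then (1:ℝ)/4 else 0) * (G.dist p.1 p.2 : ℝ)).Finite :=
      support_ite_mul_finite ((z, z) : V × V) _ _ _ (fun p hp => Prod.ext hp.1 hp.2)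
    have h4 : (Function.support fun p : V × V =>
        (if p.1 = a ∧ p.2 = b then (1:ℝ)/4 else 0) * (G.dist p.1 p.2 : ℝ)).Finite :=
      support_ite_mul_finite ((a, b) : V × V) _ _ _ (fun p hp => Prod.ext hp.1 hp.2)
    have h12 : (Function.support fun p : V × V =>
        (if p.1 = x ∧ p.2 = x then (1:ℝ)/4 else 0) * (G.dist p.1 p.2 : ℝ) +
        (if p.1 = y ∧ p.2 = y then (1:ℝ)/4 else 0) * (G.dist p.1 p.2 : ℝ)).Finite :=
      Set.Finite.subset (h1.union h2) (Function.support_add _ _)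
    have h123 : (Function.support fun p : V × V =>
        (if p.1 = x ∧ p.2 = x then (1:ℝ)/4 else 0) * (G.dist p.1 p.2 : ℝ) +
        (if p.1 = y ∧ p.2 = y then (1:ℝ)/4 else 0) * (G.dist p.1 p.2 : ℝ) +
        (if p.1 = z ∧ p.2 = z then (1:ℝ)/4 else 0) * (G.dist p.1 p.2 : ℝ)).Finite :=
      Set.Finite.subset (h12.union h3) (Function.support_add _ _)
    have hceq : cost G A = (1:ℝ)/4 * (G.dist a b : ℝ) := by
      rw [cost]
      simp only [hA, add_mul]
      rw [finsum_add_distrib h123 h4, finsum_add_distrib h12 h3, finsum_add_distrib h1 h2,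
        finsum_ite_single_mul ((x, x) : V × V) _ _ _ (fun p hp => Prod.ext hp.1 hp.2),
        finsum_ite_single_mul ((y, y) : V × V) _ _ _ (fun p hp => Prod.ext hp.1 hp.2),
        finsum_ite_single_mul ((z, z) : V × V) _ _ _ (fun p hp => Prod.ext hp.1 hp.2),
        finsum_ite_single_mul ((a, b) : V × V) _ _ _ (fun p hp => Prod.ext hp.1 hp.2)]
      simp [SimpleGraph.dist_self]
    rw [hceq]
    have : (G.dist a b : ℝ) ≤ 3 := by exact_mod_cast hdab
    linarith
  -- conclude
  by_cases hbdd : BddBelow {c : ℝ | ∃ B : V → V → ℝ,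
      IsCoupling (mu G (1/4) x) (mu G (1/4) y) B ∧ c = cost G B}
  · have hle : W G (mu G (1/4) x) (mu G (1/4) y) ≤ cost G A :=
      csInf_le hbdd ⟨A, hcoup, rfl⟩
    linarith
  · unfold W
    rw [Real.sInf_of_not_bddBelow hbdd]
    norm_num


end RicciFlatPaper
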